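/- Let μ, ν > 0 and let g_{μ,ν} be the inner product on 𝔤_0 whose matrix in the basis e₀, e₁, e₂ is diag(1, μ, ν), with Ricci form Ric. Then the space of all endomorphisms A of 𝔤_0 that are skew-symmetric with respect to both g_{μ,ν} and Ric is exactly the one-dimensional span of the endomorphism A₀ defined by A₀(e₀) = e₂, A₀(e₁) = 2e₂, A₀(e₂) = −ν·e₀ − (2ν/μ)·e₁. -/

import Mathlib

noncomputable section

open scoped BigOperators

/-- The underlying space of the 3-dimensional Lie algebras under consideration. -/
abbrev V3 : Type := Fin 3 → ℝ

/-- The standard basis `e₀, e₁, e₂`. -/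
def e3 (i : Fin 3) : V3 := Pi.single i 1

/-- The bracket of the Lie algebra `𝔤_c`:
`[e₀,e₁] = 0`, `[e₂,e₀] = e₁`, `[e₂,e₁] = −c e₀ + 2 e₁`, extended bilinearly. -/
def braC (c : ℝ) (x y : V3) : V3 :=
  ![-c * (x 2 * y 1 - y 2 * x 1),
    (x 2 * y 0 - y 2 * x 0) + 2 * (x 2 * y 1 - y 2 * x 1),
    0]

/-- The inner product with matrix `diag(1,μ,ν)` in the basis `e₀,e₁,e₂`. -/
def gD (μ ν : ℝ) (x y : V3) : ℝ := x 0 * y 0 + μ * (x 1 * y 1) + ν * (x 2 * y 2)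

/-- The curvature tensor `R(X,Y)Z = ∇_X ∇_Y Z − ∇_Y ∇_X Z − ∇_{[X,Y]} Z`. -/
def Rc (br nab : V3 → V3 → V3) (X Y Z : V3) : V3 :=
  nab X (nab Y Z) - nab Y (nab X Z) - nab (br X Y) Z

/-- The Ricci form `Ric(X,Y) = tr (Z ↦ R(Z,X)Y)`. -/
def RicF (br nab : V3 → V3 → V3) (X Y : V3) : ℝ :=
  ∑ k : Fin 3, Rc br nab (e3 k) X Y k

lemma e3_0 : e3 0 = ![1,0,0] := by funext i; fin_cases i <;> simp [e3]
lemma e3_1 : e3 1 = ![0,1,0] := by funext i; fin_cases i <;> simp [e3, Pi.single_apply]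
lemma e3_2 : e3 2 = ![0,0,1] := by funext i; fin_cases i <;> simp [e3, Pi.single_apply]

lemma nab_eq (μ ν : ℝ) (hμ : 0 < μ) (hν : 0 < ν) (nab : V3 → V3 → V3)
    (hK : ∀ X Y Z : V3, 2 * gD μ ν (nab X Y) Z =
      gD μ ν (braC 0 X Y) Z - gD μ ν (braC 0 Y Z) X + gD μ ν (braC 0 Z X) Y) :
    ∀ X Y : V3, nab X Y =
      ![ -(μ * (X 1 * Y 2 + X 2 * Y 1)) / 2,
         (X 2 * Y 0 - X 0 * Y 2 - 4 * (X 1 * Y 2)) / 2,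
         μ * (X 1 * Y 0 + X 0 * Y 1 + 4 * (X 1 * Y 1)) / (2 * ν) ] := by
  intro X Y
  have h0 := hK X Y (e3 0)
  have h1 := hK X Y (e3 1)
  have h2 := hK X Y (e3 2)
  simp [gD, braC, e3_0, e3_1, e3_2] at h0 h1 h2
  funext i
  fin_cases i
  · simp only [Fin.zero_eta, Matrix.cons_val_zero]
    rw [eq_div_iff (two_ne_zero)]
    linear_combination h0
  · simp only [Fin.mk_one, Matrix.cons_val_one, Matrix.head_cons, Matrix.cons_val_zero]
    rw [eq_div_iff (two_ne_zero)]
    apply mul_left_cancel₀ hμ.ne'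
    linear_combination h1
  · simp only [Fin.reduceFinMk, Matrix.cons_val_two, Matrix.tail_cons, Matrix.head_cons]
    rw [eq_div_iff (by positivity : (2:ℝ)*ν ≠ 0)]
    linear_combination h2

lemma ric_eq (μ ν : ℝ) (nab : V3 → V3 → V3)
    (hnab : ∀ X Y : V3, nab X Y =
      ![ -(μ * (X 1 * Y 2 + X 2 * Y 1)) / 2,
         (X 2 * Y 0 - X 0 * Y 2 - 4 * (X 1 * Y 2)) / 2,
         μ * (X 1 * Y 0 + X 0 * Y 1 + 4 * (X 1 * Y 1)) / (2 * ν) ])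
    (hν : 0 < ν) :
    ∀ X Y : V3, RicF (braC 0) nab X Y =
      -(μ/(2*ν)) * (X 0 * Y 0) - (2*μ/ν) * (X 0 * Y 1 + X 1 * Y 0)
        + (μ*(μ-8)/(2*ν)) * (X 1 * Y 1) + (-4 - μ/2) * (X 2 * Y 2) := by
  intro X Y
  simp only [RicF, Rc, Fin.sum_univ_three, Pi.sub_apply, hnab, braC, e3_0, e3_1, e3_2,
    Matrix.cons_val_zero, Matrix.cons_val_one, Matrix.head_cons, Matrix.cons_val_two,
    Matrix.tail_cons]
  field_simp
  ring

lemma decomp (A : Module.End ℝ V3) (x : V3) :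
    A x = x 0 • A (e3 0) + x 1 • A (e3 1) + x 2 • A (e3 2) := by
  have hx : x = x 0 • e3 0 + x 1 • e3 1 + x 2 • e3 2 := by
    funext i; fin_cases i <;>
      simp [e3_0, e3_1, e3_2]
  conv_lhs => rw [hx]
  simp [map_add, map_smul]


/-- the endomorphisms of `𝔤_0` which are skew-symmetric with respect to
both `g_{μ,ν}` and its Ricci form are exactly the multiples of the endomorphism `A₀`
with `A₀ e₀ = e₂`, `A₀ e₁ = 2 e₂`, `A₀ e₂ = −ν e₀ − (2ν/μ) e₁`. -/
theorem stmt3 (μ ν : ℝ) (hμ : 0 < μ) (hν : 0 < ν) (nab : V3 → V3 → V3)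
    (hK : ∀ X Y Z : V3, 2 * gD μ ν (nab X Y) Z =
      gD μ ν (braC 0 X Y) Z - gD μ ν (braC 0 Y Z) X + gD μ ν (braC 0 Z X) Y) :
    ∀ A : Module.End ℝ V3,
      ((∀ x y : V3, gD μ ν (A x) y + gD μ ν x (A y) = 0) ∧
        (∀ x y : V3, RicF (braC 0) nab (A x) y + RicF (braC 0) nab x (A y) = 0))
      ↔ ∃ t : ℝ,
          A = t • Matrix.toLin' !![0, 0, -ν; 0, 0, -(2*ν/μ); 1, 2, 0] := by
  have hnab := nab_eq μ ν hμ hν nab hK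
  have hric := ric_eq μ ν nab hnab hν
  intro A
  constructor
  · rintro ⟨h1, h2⟩
    -- entry equations from g-skewness
    have E00 := h1 (e3 0) (e3 0)
    have E01 := h1 (e3 0) (e3 1)
    have E02 := h1 (e3 0) (e3 2)
    have E11 := h1 (e3 1) (e3 1)
    have E12 := h1 (e3 1) (e3 2)
    have E22 := h1 (e3 2) (e3 2)
    simp [gD, e3_0, e3_1, e3_2] at E00 E01 E02 E11 E12 E22
    have R00 := h2 (e3 0) (e3 0)
    have R01 := h2 (e3 0) (e3 1)
    have R02 := h2 (e3 0) (e3 2)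
    simp [hric, e3_0, e3_1, e3_2] at R00 R01 R02
    have hμ' : μ ≠ 0 := hμ.ne'
    have hν' : ν ≠ 0 := hν.ne'
    have a11 : A ![0,1,0] 1 = 0 := E11.resolve_left hμ'
    have a22 : A ![0,0,1] 2 = 0 := E22.resolve_left hν'
    have a10 : A ![1,0,0] 1 = 0 := by
      rw [E00] at R00; field_simp at R00
      rw [mul_zero] at R00
      rcases mul_eq_zero.mp R00 with h | h
      · exact absurd h hμ'
      · linarith
    have a01 : A ![0,1,0] 0 = 0 := by
      rw [E00, a10, a11] at R01; field_simp at R01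
      rw [mul_zero (2 * ν)] at R01
      rcases mul_eq_zero.mp R01 with h | h
      · exact absurd h hμ'
      · linarith
    set t := A ![1,0,0] 2 with ht
    have a02 : A ![0,0,1] 0 = -(ν * t) := by linarith
    have a12 : μ * A ![0,0,1] 1 = -(ν * A ![0,1,0] 2) := by linarith
    have a21 : A ![0,1,0] 2 = 2 * t := by
      rw [a02] at R02
      field_simp at R02
      apply mul_left_cancel₀ hν'
      apply mul_left_cancel₀ hν'
      linear_combination ν * a12 + (ν/4) * R02
    refine ⟨t, ?_⟩
    have key0 : (fun j' => if j' = (0:Fin 3) then (1:ℝ) else 0) = ![1,0,0] := by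
      funext j; fin_cases j <;> simp
    have key1 : (fun j' => if j' = (1:Fin 3) then (1:ℝ) else 0) = ![0,1,0] := by
      funext j; fin_cases j <;> simp
    have key2 : (fun j' => if j' = (2:Fin 3) then (1:ℝ) else 0) = ![0,0,1] := by
      funext j; fin_cases j <;> simp
    have key0' : (Pi.single (0:Fin 3) (1:ℝ) : V3) = ![1,0,0] := e3_0
    have key1' : (Pi.single (1:Fin 3) (1:ℝ) : V3) = ![0,1,0] := e3_1
    have key2' : (Pi.single (2:Fin 3) (1:ℝ) : V3) = ![0,0,1] := e3_2
    have hM : LinearMap.toMatrix' (A : V3 →ₗ[ℝ] V3)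
        = t • !![0, 0, -ν; 0, 0, -(2*ν/μ); 1, 2, 0] := by
      ext i j
      fin_cases i <;> fin_cases j <;>
        simp only [LinearMap.toMatrix'_apply, key0, key1, key2, key0', key1', key2', Matrix.smul_apply,
          Matrix.cons_val_zero, Matrix.cons_val_one, Matrix.head_cons, Matrix.cons_val_two,
          Matrix.tail_cons, Matrix.cons_val', Matrix.empty_val', Matrix.cons_val_fin_one,
          Matrix.head_fin_const, Matrix.of_apply, smul_eq_mul, Fin.zero_eta, Fin.mk_one, Fin.reduceFinMk]
      · rw [E00]; ring
      · rw [a01]; ring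
      · rw [a02]; ring
      · rw [a10]; ring
      · rw [a11]; ring
      · -- A ![0,0,1] 1 = t * -(2*ν/μ)
        field_simp
        linear_combination a12 - ν * a21
      · ring
      · rw [a21]; ring
      · rw [a22]; ring
    calc (A : V3 →ₗ[ℝ] V3)
        = Matrix.toLin' (LinearMap.toMatrix' (A : V3 →ₗ[ℝ] V3)) := (Matrix.toLin'_toMatrix' _).symm
      _ = t • Matrix.toLin' !![0, 0, -ν; 0, 0, -(2*ν/μ); 1, 2, 0] := by
          rw [hM, map_smul]
  · rintro ⟨t, rfl⟩
    have hA : ∀ x : V3, (t • Matrix.toLin' !![0, 0, -ν; 0, 0, -(2*ν/μ); 1, 2, 0] : Module.End ℝ V3) x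
        = ![t * (-ν * x 2), t * (-(2*ν/μ) * x 2), t * (x 0 + 2 * x 1)] := by
      intro x
      funext i
      fin_cases i <;>
        simp [Matrix.toLin'_apply, Matrix.mulVec, dotProduct, Fin.sum_univ_three] <;>
        ring
    constructor
    · intro x y
      simp only [hA, gD, Matrix.cons_val_zero, Matrix.cons_val_one, Matrix.head_cons,
        Matrix.cons_val_two, Matrix.tail_cons]
      field_simp
      ring
    · intro x y
      simp only [hA, hric, Matrix.cons_val_zero, Matrix.cons_val_one, Matrix.head_cons,
        Matrix.cons_val_two, Matrix.tail_cons]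
      field_simp
      ring
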